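/- For monotone valuations and any partial allocation A, there exists a permutation π of Fin n such that the partial allocation B with B_i = A_{π(i)} satisfies: (i) the directed graph on the agents with an arc from i to k whenever v_i(B_k) > v_i(B_i) is acyclic; and (ii) for every agent i, the maximum outgoing envy does not increase: max_{k} (v_i(B_k) − v_i(B_i)) ≤ max_{k} (v_i(A_k) − v_i(A_i)). -/

import Mathlib

/-- For monotone valuations and any partial allocation A, there is a
permutation π of the agents such that the partial allocation B with B i = A (π i)
satisfies: (i) the digraph with an arc from i to k whenever v i (B k) > v i (B i)
is acyclic (it contains no directed cycle on r ≥ 2 distinct agents, encoded with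
r = r' + 2); and (ii) for every agent i, the maximum outgoing envy does not
increase: for every k there is k' with
v i (B k) − v i (B i) ≤ v i (A k') − v i (A i). -/
theorem envy_cycles_elimination
    (n m : ℕ) (hn : 1 ≤ n)
    (v : Fin n → Finset (Fin m) → ℝ)
    (hv0 : ∀ i, v i ∅ = 0)
    (hmono : ∀ i (S T : Finset (Fin m)), S ⊆ T → v i S ≤ v i T)
    (A : Fin n → Finset (Fin m))
    (hdisj : ∀ i k, i ≠ k → Disjoint (A i) (A k)) :
    ∃ π : Equiv.Perm (Fin n),
      (¬ ∃ (r : ℕ) (c : Fin (r + 2) → Fin n), Function.Injective c ∧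
        ∀ t : Fin (r + 2), v (c t) (A (π (c (t + 1)))) > v (c t) (A (π (c t)))) ∧
      (∀ i k : Fin n, ∃ k' : Fin n,
        v i (A (π k)) - v i (A (π i)) ≤ v i (A k') - v i (A i)) := by
  classical
  set f : Equiv.Perm (Fin n) → ℝ := fun π => ∑ i, v i (A (π i)) with hf
  set s : Finset (Equiv.Perm (Fin n)) :=
    Finset.univ.filter (fun π => ∀ i, v i (A i) ≤ v i (A (π i))) with hs
  have h1 : (1 : Equiv.Perm (Fin n)) ∈ s := by simp [hs]
  obtain ⟨π, hπs, hπmax⟩ := s.exists_max_image f ⟨1, h1⟩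
  have hπS : ∀ i, v i (A i) ≤ v i (A (π i)) := by
    simpa [hs] using hπs
  refine ⟨π, ?_, ?_⟩
  · rintro ⟨r, c, hcinj, hcyc⟩
    set e : Fin (r + 2) ↪ Fin n := ⟨c, hcinj⟩ with he
    set σ : Equiv.Perm (Fin n) :=
      (Equiv.addRight (1 : Fin (r + 2))).viaEmbedding e with hσ
    set π' : Equiv.Perm (Fin n) := π * σ with hπ'
    have hσc : ∀ t, σ (c t) = c (t + 1) := fun t =>
      (Equiv.addRight (1 : Fin (r + 2))).viaEmbedding_apply e t
    have hσout : ∀ i : Fin n, (∀ t, c t ≠ i) → σ i = i := by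
      intro i hi
      apply Equiv.Perm.viaEmbedding_apply_of_notMem
      rintro ⟨t, rfl⟩
      exact hi t rfl
    have hπ'c : ∀ t, π' (c t) = π (c (t + 1)) := by
      intro t
      simp [hπ', Equiv.Perm.mul_apply, hσc]
    have hπ'out : ∀ i : Fin n, (∀ t, c t ≠ i) → π' i = π i := by
      intro i hi
      simp [hπ', Equiv.Perm.mul_apply, hσout i hi]
    have hle : ∀ i : Fin n, v i (A (π i)) ≤ v i (A (π' i)) := by
      intro i
      by_cases hi : ∃ t, c t = i
      · obtain ⟨t, rfl⟩ := hi
        rw [hπ'c]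
        exact le_of_lt (hcyc t)
      · push_neg at hi
        rw [hπ'out i hi]
    have hπ's : π' ∈ s := by
      simp only [hs, Finset.mem_filter, Finset.mem_univ, true_and]
      intro i
      exact le_trans (hπS i) (hle i)
    have hlt : f π < f π' := by
      apply Finset.sum_lt_sum (fun i _ => hle i)
      refine ⟨c 0, Finset.mem_univ _, ?_⟩
      rw [hπ'c]
      exact hcyc 0
    exact absurd (hπmax π' hπ's) (not_le.mpr hlt)
  · intro i k
    exact ⟨π k, sub_le_sub_left (hπS i) _⟩
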